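/- arXiv:1305.4058 — 2 statements merged into one kernel-verified Lean document; each statement's English description precedes it below -/
import Mathlib

section
/- For every fixed t ≥ 0, the set {x ∈ D : θ_x(t) < ∞} is measurable, and the map x ↦ x(θ_x(t)), defined on this set, is measurable with respect to the (trace of the) Kolmogorov σ-algebra on D and the Borel σ-algebra on ℝ^d. -/
open scoped NNReal ENNReal Classical
open Filter Topology

noncomputable section

/-- Left limit of `x` at `t`, with the convention `x(0−) = x(0)`. -/
def leftLimit {d : ℕ} (x : ℝ≥0 → Fin d → ℝ) (t : ℝ≥0) : Fin d → ℝ :=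
  if 0 < t then limUnder (nhdsWithin t (Set.Iio t)) x else x 0

/-- `x : [0,∞) → ℝ^d` is càdlàg: right-continuous everywhere, with left limits at every `t > 0`. -/
def IsCadlag {d : ℕ} (x : ℝ≥0 → Fin d → ℝ) : Prop :=
  (∀ t : ℝ≥0, ContinuousWithinAt x (Set.Ici t) t) ∧
  (∀ t : ℝ≥0, 0 < t →
    ∃ L : Fin d → ℝ, Filter.Tendsto x (nhdsWithin t (Set.Iio t)) (nhds L))

/-- `x` is constant on the set `I`. -/
def ConstOn {d : ℕ} (x : ℝ≥0 → Fin d → ℝ) (I : Set ℝ≥0) : Prop :=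
  ∀ s ∈ I, ∀ s' ∈ I, x s = x s'

/-- `η_x(t) = sup {s ∈ [0,t) : x(s) ≠ x(t)}`, with the convention `sup ∅ = 0`. -/
def eta {d : ℕ} (x : ℝ≥0 → Fin d → ℝ) (t : ℝ≥0) : ℝ≥0 :=
  sSup {s : ℝ≥0 | s < t ∧ x s ≠ x t}

/-- The set of discontinuity points of `x`: the `t > 0` where `x(t) ≠ x(t−)`. -/
def disc {d : ℕ} (x : ℝ≥0 → Fin d → ℝ) : Set ℝ≥0 :=
  {t : ℝ≥0 | 0 < t ∧ x t ≠ leftLimit x t}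

/-- `θ_x(t) = inf {s ≥ t : x(s) ≠ x(t−)} ∈ [0,∞]`, with the convention `inf ∅ = ∞`. -/
def theta {d : ℕ} (x : ℝ≥0 → Fin d → ℝ) (t : ℝ≥0) : ℝ≥0∞ :=
  sInf ((fun s : ℝ≥0 => (s : ℝ≥0∞)) '' {s : ℝ≥0 | t ≤ s ∧ x s ≠ leftLimit x t})

/-- The map `f` replacing each "stair" of `x` by the linear interpolation of its endpoints:
`f(x)(t) = x(η_x(t)) + ((t − η_x(t))/(θ_x(t) − η_x(t))) • (x(θ_x(t)) − x(η_x(t)))`,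
with `f(x)(t) = x(t)` when `θ_x(t) = η_x(t)` or `θ_x(t) = ∞`. -/
def fmap {d : ℕ} (x : ℝ≥0 → Fin d → ℝ) : ℝ≥0 → Fin d → ℝ := fun t =>
  if theta x t = ((eta x t : ℝ≥0) : ℝ≥0∞) ∨ theta x t = ⊤ then x t
  else x (eta x t) +
    (((t : ℝ) - (eta x t : ℝ)) / ((theta x t).toReal - (eta x t : ℝ))) •
      (x (theta x t).toNNReal - x (eta x t))

/-- The space `D` of càdlàg functions `[0,∞) → ℝ^d`. -/
def Cadlag (d : ℕ) : Type := {x : ℝ≥0 → Fin d → ℝ // IsCadlag x}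

/-- The Kolmogorov σ-algebra on `D`: the trace of the σ-algebra generated by the coordinate
evaluation maps `x ↦ x(t)`, `t ≥ 0` (i.e. of the product σ-algebra). -/
instance (d : ℕ) : MeasurableSpace (Cadlag d) :=
  MeasurableSpace.comap (fun x : Cadlag d => x.1)
    (inferInstance : MeasurableSpace (ℝ≥0 → Fin d → ℝ))

variable {d : ℕ}

lemma measurable_val : Measurable (fun x : Cadlag d => x.1) :=
  measurable_iff_comap_le.2 le_rfl

lemma measurable_eval (s : ℝ≥0) : Measurable (fun x : Cadlag d => x.1 s) :=
  (measurable_pi_apply s).comp measurable_val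

lemma measurable_leftLimitFun (t : ℝ≥0) :
    Measurable (fun x : Cadlag d => leftLimit x.1 t) := by
  rcases eq_or_lt_of_le (zero_le : 0 ≤ t) with h | h
  · have : (fun x : Cadlag d => leftLimit x.1 t) = fun x => x.1 0 := by
      funext x; simp [leftLimit, ← h]
    rw [this]; exact measurable_eval 0
  · haveI : (𝓝[<] t).NeBot := nhdsWithin_Iio_self_neBot' ⟨0, h⟩
    set s : ℕ → ℝ≥0 := fun n => t - t / (n + 2) with hs
    have hslt : ∀ n, s n < t := fun n =>
      tsub_lt_self h (div_pos h (by positivity))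
    have hstend : Tendsto s atTop (𝓝[<] t) := by
      apply tendsto_nhdsWithin_of_tendsto_nhds_of_eventually_within
      · have h1 : Tendsto (fun n : ℕ => t / ((n : ℝ≥0) + 2)) atTop (𝓝 0) := by
          have := (tendsto_const_div_atTop_nhds_zero_nat t).comp
            (tendsto_add_atTop_nat 2)
          simpa [Function.comp_def] using this
        have h2 : Tendsto (fun _ : ℕ => t) atTop (𝓝 t) := tendsto_const_nhds
        have := h2.sub h1
        simpa using this
      · exact Eventually.of_forall fun n => hslt n
    apply measurable_of_tendsto_metrizable' atTop (fun n => measurable_eval (s n))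
    rw [tendsto_pi_nhds]
    intro x
    obtain ⟨L, hL⟩ := x.2.2 t h
    have hll : leftLimit x.1 t = L := by
      rw [leftLimit, if_pos h]; exact hL.limUnder_eq
    rw [hll]
    exact hL.comp hstend

lemma theta_eq_iInf (x : ℝ≥0 → Fin d → ℝ) (hx : ∀ s, ContinuousWithinAt x (Set.Ici s) s)
    (t : ℝ≥0) :
    theta x t = ⨅ q : ℚ, if t ≤ Real.toNNReal q ∧ x (Real.toNNReal q) ≠ leftLimit x t
      then ((Real.toNNReal q : ℝ≥0) : ℝ≥0∞) else ⊤ := by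
  apply le_antisymm
  · apply le_iInf
    intro q
    split_ifs with h
    · exact sInf_le ⟨Real.toNNReal q, h, rfl⟩
    · exact le_top
  · apply le_sInf
    rintro _ ⟨s, ⟨hts, hsL⟩, rfl⟩
    apply ENNReal.le_of_forall_pos_le_add
    intro ε hε _
    -- find a rational q in (s, min b (s+ε)) with x q ≠ leftLimit x t
    have hev : ∀ᶠ u in 𝓝[≥] s, x u ≠ leftLimit x t :=
      (hx s).eventually (eventually_ne_nhds hsL)
    obtain ⟨b, hb, hbs⟩ := (nhdsGE_basis_of_exists_gt ⟨s + 1, lt_add_one s⟩).eventually_iff.1 hev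
    obtain ⟨q, hq1, hq2⟩ := exists_rat_btwn (show (s : ℝ) < min b (s + ε) by
      apply lt_min
      · exact_mod_cast hb
      · exact_mod_cast lt_add_of_pos_right _ hε)
    have hq0 : (0 : ℝ) ≤ q := le_trans s.coe_nonneg hq1.le
    have hsq : s < Real.toNNReal q := by
      rw [← Real.toNNReal_coe (r := s)]
      exact (Real.toNNReal_lt_toNNReal_iff (lt_of_le_of_lt s.coe_nonneg hq1)).2 hq1
    have hqb : (Real.toNNReal q : ℝ≥0) < b := by
      have : (q : ℝ) < b := lt_of_lt_of_le hq2 (min_le_left _ _)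
      rw [← Real.toNNReal_coe (r := b)]
      exact (Real.toNNReal_lt_toNNReal_iff (lt_of_le_of_lt hq0 this)).2 this
    have hqse : (Real.toNNReal q : ℝ≥0) ≤ s + ε := by
      have : (q : ℝ) < (s : ℝ) + ε := lt_of_lt_of_le hq2 (min_le_right _ _)
      rw [← Real.toNNReal_coe (r := s + ε)]
      push_cast
      exact ((Real.toNNReal_lt_toNNReal_iff (lt_of_le_of_lt hq0 this)).2 this).le
    have hcond : t ≤ Real.toNNReal q ∧ x (Real.toNNReal q) ≠ leftLimit x t := by
      refine ⟨le_trans hts hsq.le, ?_⟩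
      exact hbs ⟨hsq.le, hqb⟩
    calc (⨅ q : ℚ, if t ≤ Real.toNNReal q ∧ x (Real.toNNReal q) ≠ leftLimit x t
          then ((Real.toNNReal q : ℝ≥0) : ℝ≥0∞) else ⊤)
        ≤ ((Real.toNNReal q : ℝ≥0) : ℝ≥0∞) := by
          refine le_trans (iInf_le _ q) ?_
          rw [if_pos hcond]
      _ ≤ ((s : ℝ≥0) : ℝ≥0∞) + (ε : ℝ≥0∞) := by
          rw [← ENNReal.coe_add]
          exact_mod_cast hqse

lemma measurable_thetaFun (t : ℝ≥0) : Measurable (fun x : Cadlag d => theta x.1 t) := by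
  have heq : (fun x : Cadlag d => theta x.1 t) = fun x =>
      ⨅ q : ℚ, if t ≤ Real.toNNReal q ∧ x.1 (Real.toNNReal q) ≠ leftLimit x.1 t
        then ((Real.toNNReal q : ℝ≥0) : ℝ≥0∞) else ⊤ :=
    funext fun x => theta_eq_iInf x.1 x.2.1 t
  rw [heq]
  refine Measurable.iInf fun q => ?_
  have hset : MeasurableSet {x : Cadlag d |
      t ≤ Real.toNNReal q ∧ x.1 (Real.toNNReal q) ≠ leftLimit x.1 t} := by
    by_cases h : t ≤ Real.toNNReal q
    · simp only [h, true_and]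
      exact (measurableSet_eq_fun (measurable_eval _) (measurable_leftLimitFun t)).compl
    · simp [h]
  exact Measurable.ite hset measurable_const measurable_const


/-- For every fixed `t ≥ 0`, the set `{x ∈ D : θ_x(t) < ∞}` is measurable, and on this set the
map `x ↦ x(θ_x(t))` is measurable (for the trace of the Kolmogorov σ-algebra). -/
theorem measurable_eval_theta (d : ℕ) (hd : 1 ≤ d) (t : ℝ≥0) :
    MeasurableSet {x : Cadlag d | theta x.1 t < ⊤} ∧
    Measurable (fun p : {x : Cadlag d // theta x.1 t < ⊤} =>
      p.1.1 (theta p.1.1 t).toNNReal) := by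
  refine ⟨measurable_thetaFun t measurableSet_Iio, ?_⟩
  set Θ : {x : Cadlag d // theta x.1 t < ⊤} → ℝ≥0 :=
    fun p => (theta p.1.1 t).toNNReal with hΘ
  have hΘm : Measurable Θ :=
    ENNReal.measurable_toNNReal.comp ((measurable_thetaFun t).comp measurable_subtype_coe)
  have hF : ∀ n : ℕ, Measurable
      (fun p : {x : Cadlag d // theta x.1 t < ⊤} =>
        p.1.1 ((⌈Θ p * 2 ^ n⌉₊ : ℝ≥0) / 2 ^ n)) := by
    intro n
    have hk : Measurable (fun p : {x : Cadlag d // theta x.1 t < ⊤} => ⌈Θ p * 2 ^ n⌉₊) :=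
      Nat.ceil_mono.measurable.comp (hΘm.mul_const _)
    have hprod : Measurable (fun z : {x : Cadlag d // theta x.1 t < ⊤} × ℕ =>
        z.1.1.1 ((z.2 : ℝ≥0) / 2 ^ n)) :=
      measurable_from_prod_countable_left fun k => by
        exact (measurable_eval ((k : ℝ≥0) / 2 ^ n)).comp
          (measurable_subtype_coe (p := fun x : Cadlag d => theta x.1 t < ⊤))
    exact hprod.comp (measurable_id.prodMk hk)
  apply measurable_of_tendsto_metrizable' atTop hF
  rw [tendsto_pi_nhds]
  intro p
  have h2pos : ∀ n : ℕ, (0 : ℝ≥0) < 2 ^ n := fun n => pow_pos two_pos n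
  have hτ_ge : ∀ n, Θ p ≤ (⌈Θ p * 2 ^ n⌉₊ : ℝ≥0) / 2 ^ n := by
    intro n
    rw [le_div_iff₀ (h2pos n)]
    exact Nat.le_ceil _
  have hτ_le : ∀ n, (⌈Θ p * 2 ^ n⌉₊ : ℝ≥0) / 2 ^ n ≤ Θ p + (1 / 2) ^ n := by
    intro n
    rw [div_le_iff₀ (h2pos n)]
    have h1 : ((1 : ℝ≥0) / 2) ^ n * 2 ^ n = 1 := by
      rw [← mul_pow]; norm_num
    have h2 : (Θ p + (1 / 2) ^ n) * 2 ^ n = Θ p * 2 ^ n + 1 := by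
      rw [add_mul, h1]
    rw [h2]
    exact_mod_cast (Nat.ceil_lt_add_one zero_le).le
  have hτ : Tendsto (fun n => (⌈Θ p * 2 ^ n⌉₊ : ℝ≥0) / 2 ^ n) atTop (𝓝[≥] (Θ p)) := by
    apply tendsto_nhdsWithin_of_tendsto_nhds_of_eventually_within
    · have hup : Tendsto (fun n : ℕ => Θ p + (1 / 2 : ℝ≥0) ^ n) atTop (𝓝 (Θ p)) := by
        have hc : Tendsto (fun _ : ℕ => Θ p) atTop (𝓝 (Θ p)) := tendsto_const_nhds
        have := hc.add (NNReal.tendsto_pow_atTop_nhds_zero_of_lt_one (r := 1 / 2)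
          (by rw [← NNReal.coe_lt_coe]; norm_num))
        simpa using this
      exact tendsto_of_tendsto_of_tendsto_of_le_of_le tendsto_const_nhds hup hτ_ge hτ_le
    · exact Eventually.of_forall fun n => hτ_ge n
  exact (p.1.2.1 (Θ p)).tendsto.comp hτ
end
end

section
/- Let y : [0,∞) → [0,∞) be nondecreasing, right-continuous, unbounded above, with y(0) = 0. Suppose t ≥ 0 does not belong to any interval [y(τ−), y(τ)) with τ a discontinuity point of y. Then ((y^− ∘ (y^{-1})^−))^+(t) = t, i.e. the right limit at t of the function u ↦ y^−((y^{-1})^−(u)) equals t. -/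
open scoped NNReal
open Filter Topology Function

noncomputable section

/-- The generalized (right-continuous) inverse `y⁻¹(t) = inf {s > 0 : y(s) > t}` of a
nondecreasing, right-continuous, unbounded function `y : [0,∞) → [0,∞)`. -/
def ginv (y : ℝ≥0 → ℝ≥0) (t : ℝ≥0) : ℝ≥0 :=
  sInf {s : ℝ≥0 | 0 < s ∧ t < y s}

lemma ginv_set_nonempty (y : ℝ≥0 → ℝ≥0) (hub : ∀ M : ℝ≥0, ∃ s : ℝ≥0, M < y s)
    (h0 : y 0 = 0) (t : ℝ≥0) : {s : ℝ≥0 | 0 < s ∧ t < y s}.Nonempty := by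
  obtain ⟨s, hs⟩ := hub t
  refine ⟨s, ?_, hs⟩
  rcases eq_or_lt_of_le (show 0 ≤ s from zero_le) with rfl | h
  · rw [h0] at hs; exact absurd hs (by simp)
  · exact h

lemma ginv_mono (y : ℝ≥0 → ℝ≥0) (hub : ∀ M : ℝ≥0, ∃ s : ℝ≥0, M < y s)
    (h0 : y 0 = 0) : Monotone (ginv y) := by
  intro a b hab
  exact csInf_le_csInf (OrderBot.bddBelow _) (ginv_set_nonempty y hub h0 b)
    (fun s hs => ⟨hs.1, lt_of_le_of_lt hab hs.2⟩)

/-- For `s < ginv y v`, we have `y s ≤ v`. -/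
lemma y_le_of_lt_ginv (y : ℝ≥0 → ℝ≥0) (h0 : y 0 = 0) {s v : ℝ≥0}
    (hs : s < ginv y v) : y s ≤ v := by
  have hns : s ∉ {s : ℝ≥0 | 0 < s ∧ v < y s} :=
    notMem_of_lt_csInf hs (OrderBot.bddBelow _)
  rcases eq_or_lt_of_le (show 0 ≤ s from zero_le) with rfl | hpos
  · simp [h0]
  · by_contra h
    exact hns ⟨hpos, lt_of_not_ge h⟩

/-- `v ≤ y (ginv y v)` by right continuity. -/
lemma le_y_ginv (y : ℝ≥0 → ℝ≥0)
    (hrc : ∀ t : ℝ≥0, ContinuousWithinAt y (Set.Ici t) t)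
    (hub : ∀ M : ℝ≥0, ∃ s : ℝ≥0, M < y s) (h0 : y 0 = 0) (v : ℝ≥0) :
    v ≤ y (ginv y v) := by
  set S := {s : ℝ≥0 | 0 < s ∧ v < y s} with hS
  have hne : S.Nonempty := ginv_set_nonempty y hub h0 v
  set I := ginv y v with hI
  by_contra h
  have hlt : y I < v := lt_of_not_ge h
  have hT : {s : ℝ≥0 | y s < v} ∈ 𝓝[≥] I := by
    have : Set.Iio v ∈ 𝓝 (y I) := Iio_mem_nhds hlt
    exact hrc I this
  obtain ⟨b, hIb, hsub⟩ :=
    (mem_nhdsGE_iff_exists_Ico_subset' (lt_add_one I)).1 hT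
  obtain ⟨s, hsS, hsb⟩ := exists_lt_of_csInf_lt hne (show sInf S < b from hIb)
  have hIs : I ≤ s := csInf_le (OrderBot.bddBelow _) hsS
  have : y s < v := hsub ⟨hIs, hsb⟩
  exact absurd hsS.2 (not_lt.2 this.le)

/-- If `t ≥ 0` belongs to no interval `[y(τ−), y(τ))` with `τ` a discontinuity point of `y`,
then the right limit at `t` of `u ↦ y⁻((y⁻¹)⁻(u))` equals `t`. -/
theorem rightLim_eq_self_of_not_jump (y : ℝ≥0 → ℝ≥0) (hmono : Monotone y)
    (hrc : ∀ t : ℝ≥0, ContinuousWithinAt y (Set.Ici t) t)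
    (hub : ∀ M : ℝ≥0, ∃ s : ℝ≥0, M < y s) (h0 : y 0 = 0) (t : ℝ≥0)
    (ht : ¬ ∃ τ : ℝ≥0, 0 < τ ∧ Function.leftLim y τ ≠ y τ ∧
      t ∈ Set.Ico (Function.leftLim y τ) (y τ)) :
    Function.rightLim (fun u => Function.leftLim y (Function.leftLim (ginv y) u)) t = t := by
  have hginv : Monotone (ginv y) := ginv_mono y hub h0
  have hG : Monotone (fun u => Function.leftLim y (Function.leftLim (ginv y) u)) :=
    hmono.leftLim.comp hginv.leftLim
  have hbot0 : 𝓝[<] (0 : ℝ≥0) = ⊥ := by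
    rw [show Set.Iio (0 : ℝ≥0) = ∅ from Set.eq_empty_iff_forall_notMem.2 (fun x hx => (not_lt.2 (show 0 ≤ x from zero_le)) hx), nhdsWithin_empty]
  have hll0 : Function.leftLim y 0 = 0 := by
    rw [leftLim_eq_of_eq_bot y hbot0, h0]
  -- Upper bound: G u ≤ u for u > 0
  have hGle : ∀ u : ℝ≥0, 0 < u →
      Function.leftLim y (Function.leftLim (ginv y) u) ≤ u := by
    intro u hu
    set a := Function.leftLim (ginv y) u with ha
    rcases eq_or_lt_of_le (show 0 ≤ a from zero_le) with hz | hpos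
    · rw [← hz, hll0]; exact zero_le
    · have hnb : 𝓝[<] a ≠ ⊥ :=
        (nhdsWithin_Iio_self_neBot' (⟨0, hpos⟩ : (Set.Iio a).Nonempty)).ne
      haveI : (𝓝[<] a).NeBot := ⟨hnb⟩
      rw [hmono.leftLim_eq_sSup]
      apply csSup_le (Set.Nonempty.image _ (⟨0, hpos⟩ : (Set.Iio a).Nonempty))
      rintro _ ⟨s, hs, rfl⟩
      -- s < a = leftLim (ginv y) u, so ∃ v < u, s < ginv y v
      have hnbu : 𝓝[<] u ≠ ⊥ :=
        (nhdsWithin_Iio_self_neBot' (⟨0, hu⟩ : (Set.Iio u).Nonempty)).ne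
      haveI : (𝓝[<] u).NeBot := ⟨hnbu⟩
      rw [ha, hginv.leftLim_eq_sSup] at hs
      obtain ⟨_, ⟨v, hv, rfl⟩, hsv⟩ :=
        exists_lt_of_lt_csSup (show (ginv y '' Set.Iio u).Nonempty from ⟨ginv y 0, 0, hu, rfl⟩) hs
      exact (y_le_of_lt_ginv y h0 hsv).trans hv.le
  -- Lower bound: t ≤ G u for u > t
  have hGge : ∀ u : ℝ≥0, t < u →
      t ≤ Function.leftLim y (Function.leftLim (ginv y) u) := by
    intro u hu
    set a := Function.leftLim (ginv y) u with ha
    have hya : u ≤ y a := by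
      by_contra h
      obtain ⟨v, hv1, hv2⟩ := exists_between (lt_of_not_ge h)
      have : v ≤ y a := le_trans (le_y_ginv y hrc hub h0 v)
        (hmono ((hginv.le_leftLim hv2)))
      exact absurd hv1 (not_lt.2 this)
    rcases eq_or_ne (Function.leftLim y a) (y a) with heq | hne
    · rw [heq]; exact le_trans hu.le hya
    · by_contra h
      have hlt : Function.leftLim y a < t := lt_of_not_ge h
      have hapos : 0 < a := by
        rcases eq_or_lt_of_le (show 0 ≤ a from zero_le) with hz | hp
        · exfalso; apply hne; rw [← hz, leftLim_eq_of_eq_bot y hbot0]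
        · exact hp
      exact ht ⟨a, hapos, hne, hlt.le, lt_of_lt_of_le hu hya⟩
  -- conclude
  have hnb : 𝓝[>] t ≠ ⊥ := (nhdsGT_neBot t).ne
  haveI : (𝓝[>] t).NeBot := ⟨hnb⟩
  rw [hG.rightLim_eq_sInf]
  apply le_antisymm
  · have h1 : sInf ((fun u => Function.leftLim y (Function.leftLim (ginv y) u)) '' Set.Ioi t)
        ≤ sInf (Set.Ioi t) := by
      apply le_csInf ⟨t + 1, by simp⟩
      intro b hb
      exact le_trans (csInf_le (OrderBot.bddBelow _) ⟨b, hb, rfl⟩)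
        (hGle b (lt_of_le_of_lt (show 0 ≤ t from zero_le) hb))
    rwa [csInf_Ioi] at h1
  · apply le_csInf (Set.Nonempty.image _ ⟨t + 1, by simp⟩)
    rintro _ ⟨u, hu, rfl⟩
    exact hGge u hu
end
end
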